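/- For λ > −1, t ∈ ℝ and integer m ≥ 2, let 𝒜_n(t;λ) = det[μ_{2(i+j)}(t;λ,m)]_{i,j=0}^{n−1} (with 𝒜₀ = 1) be the Hankel determinant of even moments of the generalised higher order Freud weight with parameter λ. Then the recurrence coefficients of the associated monic orthogonal polynomials satisfy β_{2n}(t;λ) = 𝒜_{n+1}(t;λ) 𝒜_{n−1}(t;λ+1) / ( 𝒜_n(t;λ) 𝒜_n(t;λ+1) ) = (d/dt) ln( 𝒜_n(t;λ+1)/𝒜_n(t;λ) ) and β_{2n+1}(t;λ) = 𝒜_n(t;λ) 𝒜_{n+1}(t;λ+1) / ( 𝒜_{n+1}(t;λ) 𝒜_n(t;λ+1) ) = (d/dt) ln( 𝒜_{n+1}(t;λ)/𝒜_n(t;λ+1) ). -/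

import Mathlib

open MeasureTheory Real Polynomial

/-- The generalised higher order Freud weight `ω(x;t,λ) = |x|^{2λ+1} exp(t x² − x^{2m})`. -/
noncomputable def freudWeight (m : ℕ) (lam t x : ℝ) : ℝ :=
  |x| ^ (2 * lam + 1) * Real.exp (t * x ^ 2 - x ^ (2 * m))

/-- The `k`-th moment `μ_k(t;λ,m)` of the generalised higher order Freud weight. -/
noncomputable def freudMoment (m : ℕ) (lam : ℝ) (k : ℕ) (t : ℝ) : ℝ :=
  ∫ x : ℝ, x ^ k * freudWeight m lam t x

/-- The Hankel determinant `𝒜_n(t;λ) = det[μ_{2(i+j)}(t;λ,m)]_{i,j=0}^{n−1}`. -/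
noncomputable def hankelA (m : ℕ) (lam : ℝ) (n : ℕ) (t : ℝ) : ℝ :=
  Matrix.det (Matrix.of fun i j : Fin n => freudMoment m lam (2 * ((i : ℕ) + (j : ℕ))) t)

/-! ### Analytic preliminaries -/

lemma freudWeight_nonneg (m : ℕ) (lam t x : ℝ) : 0 ≤ freudWeight m lam t x :=
  mul_nonneg (Real.rpow_nonneg (abs_nonneg x) _) (Real.exp_pos _).le

lemma freudWeight_pos (m : ℕ) (lam t : ℝ) {x : ℝ} (hx : x ≠ 0) : 0 < freudWeight m lam t x :=
  mul_pos (Real.rpow_pos_of_pos (abs_pos.mpr hx) _) (Real.exp_pos _)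

lemma exp_arg_le {m : ℕ} (hm : 2 ≤ m) {c s : ℝ} (x : ℝ) (hs : |s| ≤ c) :
    s * x ^ 2 - x ^ (2 * m) ≤ (c + 1) ^ 2 - x ^ 2 := by
  have hc : 0 ≤ c := le_trans (abs_nonneg s) hs
  have hx2 : (0:ℝ) ≤ x ^ 2 := sq_nonneg x
  have hxm : x ^ (2 * m) = (x ^ 2) ^ m := by rw [pow_mul]
  have h1 : s * x ^ 2 ≤ c * x ^ 2 :=
    mul_le_mul_of_nonneg_right (le_trans (le_abs_self s) hs) hx2
  have hkey : (c + 1) * x ^ 2 ≤ (c + 1) ^ 2 + (x ^ 2) ^ m := by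
    rcases le_or_gt (x ^ 2) (c + 1) with h | h
    · have h2 : (c + 1) * x ^ 2 ≤ (c + 1) ^ 2 := by nlinarith
      have h3 : (0:ℝ) ≤ (x ^ 2) ^ m := pow_nonneg hx2 m
      linarith
    · have h1x : (1:ℝ) ≤ x ^ 2 := by linarith
      have h2 : (x ^ 2) ^ 2 ≤ (x ^ 2) ^ m := pow_le_pow_right₀ h1x hm
      have h3 : (c + 1) * x ^ 2 ≤ (x ^ 2) * x ^ 2 := by nlinarith
      have h4 : (0:ℝ) ≤ (c + 1) ^ 2 := sq_nonneg _
      nlinarith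
  rw [hxm]; nlinarith

lemma integrable_abs_rpow_mul_exp {s : ℝ} (hs : -1 < s) :
    Integrable (fun x : ℝ => |x| ^ s * Real.exp (-x ^ 2)) := by
  have h0 : IntegrableOn (fun x : ℝ => |x| ^ s * Real.exp (-x ^ 2)) (Set.Ioi 0) := by
    have h := integrableOn_rpow_mul_exp_neg_mul_sq (b := 1) one_pos hs
    refine h.congr_fun (fun x hx => ?_) measurableSet_Ioi
    rw [abs_of_pos (Set.mem_Ioi.mp hx)]; norm_num
  have h1 : IntegrableOn (fun x : ℝ => |x| ^ s * Real.exp (-x ^ 2)) (Set.Iio 0) := by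
    rw [← (Measure.measurePreserving_neg (volume : Measure ℝ)).integrableOn_comp_preimage
        (Homeomorph.neg ℝ).measurableEmbedding]
    have hpre : (Neg.neg ⁻¹' Set.Iio (0:ℝ)) = Set.Ioi 0 := by
      ext y; simp
    rw [hpre]
    refine h0.congr_fun (fun x _ => ?_) measurableSet_Ioi
    simp [abs_neg, neg_sq]
  rw [← integrableOn_univ, ← Set.Iio_union_Ici (a := (0:ℝ)), integrableOn_union,
    integrableOn_Ici_iff_integrableOn_Ioi]
  exact ⟨h1, h0⟩

lemma measurable_pow_freudWeight (m : ℕ) (lam t : ℝ) (k : ℕ) :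
    Measurable fun x : ℝ => x ^ k * freudWeight m lam t x := by
  unfold freudWeight; fun_prop

lemma freud_bound {m : ℕ} (hm : 2 ≤ m) (lam : ℝ) {c : ℝ} (k : ℕ) {s x : ℝ}
    (hs : |s| ≤ c) (hx : x ≠ 0) :
    ‖x ^ k * freudWeight m lam s x‖ ≤
      Real.exp ((c + 1) ^ 2) * (|x| ^ ((k : ℝ) + (2 * lam + 1)) * Real.exp (-x ^ 2)) := by
  have hax : 0 < |x| := abs_pos.mpr hx
  have h1 : ‖x ^ k * freudWeight m lam s x‖ =
      |x| ^ ((k : ℝ) + (2 * lam + 1)) * Real.exp (s * x ^ 2 - x ^ (2 * m)) := by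
    rw [Real.norm_eq_abs, abs_mul, abs_of_nonneg (freudWeight_nonneg m lam s x), abs_pow,
      freudWeight, Real.rpow_add hax ((k : ℝ)) (2 * lam + 1), Real.rpow_natCast, mul_assoc]
  rw [h1]
  have h2 : Real.exp (s * x ^ 2 - x ^ (2 * m)) ≤
      Real.exp ((c + 1) ^ 2) * Real.exp (-x ^ 2) := by
    rw [← Real.exp_add]
    exact Real.exp_le_exp.mpr (by have := exp_arg_le hm x hs; linarith)
  calc |x| ^ ((k : ℝ) + (2 * lam + 1)) * Real.exp (s * x ^ 2 - x ^ (2 * m))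
      ≤ |x| ^ ((k : ℝ) + (2 * lam + 1)) * (Real.exp ((c + 1) ^ 2) * Real.exp (-x ^ 2)) :=
        mul_le_mul_of_nonneg_left h2 (Real.rpow_nonneg (abs_nonneg x) _)
    _ = Real.exp ((c + 1) ^ 2) * (|x| ^ ((k : ℝ) + (2 * lam + 1)) * Real.exp (-x ^ 2)) := by ring

lemma ae_ne_zero : ∀ᵐ x : ℝ, x ≠ 0 := by
  have h : {x : ℝ | ¬ x ≠ 0} = {0} := by ext y; simp
  rw [MeasureTheory.ae_iff, h]
  exact measure_singleton 0

lemma integrable_pow_freud {m : ℕ} (hm : 2 ≤ m) {lam : ℝ} (hlam : -1 < lam) (t : ℝ) (k : ℕ) :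
    Integrable fun x : ℝ => x ^ k * freudWeight m lam t x := by
  have hs : (-1 : ℝ) < (k : ℝ) + (2 * lam + 1) := by
    have : (0:ℝ) ≤ (k : ℝ) := Nat.cast_nonneg k
    linarith
  refine Integrable.mono' (((integrable_abs_rpow_mul_exp hs)).const_mul
      (Real.exp ((|t| + 1) ^ 2))) (measurable_pow_freudWeight m lam t k).aestronglyMeasurable ?_
  filter_upwards [ae_ne_zero] with x hx
  exact freud_bound hm lam k (le_refl |t|) hx

/-! ### The bilinear form -/

noncomputable def freudPhi (m : ℕ) (lam t : ℝ) (p q : Polynomial ℝ) : ℝ :=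
  ∫ x : ℝ, p.eval x * q.eval x * freudWeight m lam t x

lemma integrable_eval_freud {m : ℕ} (hm : 2 ≤ m) {lam : ℝ} (hlam : -1 < lam) (t : ℝ)
    (p : Polynomial ℝ) : Integrable fun x : ℝ => p.eval x * freudWeight m lam t x := by
  have h : ∀ x : ℝ, p.eval x * freudWeight m lam t x =
      ∑ k ∈ Finset.range (p.natDegree + 1), p.coeff k * (x ^ k * freudWeight m lam t x) := by
    intro x
    rw [Polynomial.eval_eq_sum_range, Finset.sum_mul]
    exact Finset.sum_congr rfl fun k _ => by ring
  simp_rw [h]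
  exact integrable_finset_sum _ fun k _ => (integrable_pow_freud hm hlam t k).const_mul _

lemma integrable_mul_eval_freud {m : ℕ} (hm : 2 ≤ m) {lam : ℝ} (hlam : -1 < lam) (t : ℝ)
    (p q : Polynomial ℝ) :
    Integrable fun x : ℝ => p.eval x * q.eval x * freudWeight m lam t x := by
  simpa only [Polynomial.eval_mul] using integrable_eval_freud hm hlam t (p * q)

lemma freudPhi_comm {m : ℕ} {lam t : ℝ} (p q : Polynomial ℝ) :
    freudPhi m lam t p q = freudPhi m lam t q p := by
  unfold freudPhi; congr 1; funext x; ring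

lemma freudPhi_zero_right {m : ℕ} {lam t : ℝ} (p : Polynomial ℝ) :
    freudPhi m lam t p 0 = 0 := by simp [freudPhi]

lemma freudPhi_add_right {m : ℕ} (hm : 2 ≤ m) {lam : ℝ} (hlam : -1 < lam) {t : ℝ}
    (p q r : Polynomial ℝ) :
    freudPhi m lam t p (q + r) = freudPhi m lam t p q + freudPhi m lam t p r := by
  unfold freudPhi
  rw [← integral_add (integrable_mul_eval_freud hm hlam t p q)
    (integrable_mul_eval_freud hm hlam t p r)]
  congr 1; funext x; simp [Polynomial.eval_add]; ring

lemma freudPhi_C_mul_right {m : ℕ} {lam t : ℝ} (a : ℝ) (p q : Polynomial ℝ) :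
    freudPhi m lam t p (Polynomial.C a * q) = a * freudPhi m lam t p q := by
  unfold freudPhi
  rw [← integral_const_mul]
  congr 1; funext x; simp; ring

lemma freudPhi_sum_right {m : ℕ} (hm : 2 ≤ m) {lam : ℝ} (hlam : -1 < lam) {t : ℝ}
    (p : Polynomial ℝ) {ι : Type*} (s : Finset ι) (f : ι → Polynomial ℝ) :
    freudPhi m lam t p (∑ i ∈ s, f i) = ∑ i ∈ s, freudPhi m lam t p (f i) := by
  classical
  induction s using Finset.induction with
  | empty => simp [freudPhi_zero_right]
  | insert _ _ h ih =>
    rw [Finset.sum_insert h, freudPhi_add_right hm hlam, ih, Finset.sum_insert h]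

/-! ### Orthogonality facts -/

section OPS

variable {m : ℕ} {lam t : ℝ} (P : ℝ → ℝ → ℕ → Polynomial ℝ) (β : ℝ → ℝ → ℕ → ℝ)

lemma orth_lower (hm : 2 ≤ m) (hlam : -1 < lam)
    (hmon : ∀ n, (P lam t n).Monic) (hdeg : ∀ n, (P lam t n).natDegree = n)
    (horth : ∀ j k, j ≠ k → freudPhi m lam t (P lam t j) (P lam t k) = 0) :
    ∀ (K : ℕ) (q : Polynomial ℝ), q.degree < (K : ℕ) →
      freudPhi m lam t (P lam t K) q = 0 := by
  intro K
  have main : ∀ d : ℕ, ∀ q : Polynomial ℝ, q.natDegree ≤ d → q.degree < (K : ℕ) →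
      freudPhi m lam t (P lam t K) q = 0 := by
    intro d
    induction d using Nat.strong_induction_on with
    | _ d ih =>
      intro q hqd hqK
      by_cases hq0 : q = 0
      · rw [hq0]; exact freudPhi_zero_right _
      · have hDK : q.natDegree < K := by
          rwa [← Polynomial.natDegree_lt_iff_degree_lt hq0] at hqK
        set c := q.leadingCoeff with hc
        have hcne : c ≠ 0 := Polynomial.leadingCoeff_ne_zero.mpr hq0
        set D := q.natDegree with hD
        set r := q - Polynomial.C c * P lam t D with hr
        have hq : q = Polynomial.C c * P lam t D + r := by rw [hr]; ring
        have hPD0 : P lam t D ≠ 0 := (hmon D).ne_zero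
        have hdegCP : q.degree = (Polynomial.C c * P lam t D).degree := by
          rw [Polynomial.degree_C_mul hcne, Polynomial.degree_eq_natDegree hq0,
            Polynomial.degree_eq_natDegree hPD0, hdeg D]
        have hlc : q.leadingCoeff = (Polynomial.C c * P lam t D).leadingCoeff := by
          rw [Polynomial.leadingCoeff_mul, Polynomial.leadingCoeff_C, (hmon D).leadingCoeff,
            mul_one]
        have h1 : freudPhi m lam t (P lam t K) (P lam t D) = 0 :=
          horth K D (by omega)
        rw [hq, freudPhi_add_right hm hlam, freudPhi_C_mul_right, h1, mul_zero, zero_add]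
        by_cases hr0 : r = 0
        · rw [hr0]; exact freudPhi_zero_right _
        · have hdr : r.degree < q.degree := Polynomial.degree_sub_lt hdegCP hq0 hlc
          have hnr : r.natDegree < D := Polynomial.natDegree_lt_natDegree hr0 hdr
          exact ih r.natDegree (by omega) r le_rfl (hdr.trans hqK)
  intro q hq
  exact main q.natDegree q le_rfl hq

lemma freudPhi_P_monic (hm : 2 ≤ m) (hlam : -1 < lam)
    (hmon : ∀ n, (P lam t n).Monic) (hdeg : ∀ n, (P lam t n).natDegree = n)
    (horth : ∀ j k, j ≠ k → freudPhi m lam t (P lam t j) (P lam t k) = 0)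
    (K : ℕ) (p : Polynomial ℝ) (hpm : p.Monic) (hpd : p.natDegree = K) :
    freudPhi m lam t (P lam t K) p = freudPhi m lam t (P lam t K) (P lam t K) := by
  have hsplit : p = P lam t K + (p - P lam t K) := by ring
  rw [hsplit, freudPhi_add_right hm hlam]
  by_cases h0 : p - P lam t K = 0
  · rw [h0, freudPhi_zero_right, add_zero]
  · have hdeq : p.degree = (P lam t K).degree := by
      rw [Polynomial.degree_eq_natDegree hpm.ne_zero,
        Polynomial.degree_eq_natDegree (hmon K).ne_zero, hpd, hdeg K]
    have hlc : p.leadingCoeff = (P lam t K).leadingCoeff := by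
      rw [hpm.leadingCoeff, (hmon K).leadingCoeff]
    have hdlt : (p - P lam t K).degree < (K : ℕ) := by
      have := Polynomial.degree_sub_lt hdeq hpm.ne_zero hlc
      rwa [Polynomial.degree_eq_natDegree hpm.ne_zero, hpd] at this
    rw [orth_lower P hm hlam hmon hdeg horth K _ hdlt, add_zero]

lemma parity_coeff
    (hP0 : P lam t 0 = 1) (hP1 : P lam t 1 = Polynomial.X)
    (hrec : ∀ n, 1 ≤ n → P lam t (n + 1) =
      Polynomial.X * P lam t n - Polynomial.C (β lam t n) * P lam t (n - 1)) :
    ∀ K k, (k + K) % 2 = 1 → (P lam t K).coeff k = 0 := by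
  intro K
  induction K using Nat.strong_induction_on with
  | _ K ih =>
    match K with
    | 0 =>
      intro k hk
      rw [hP0]
      have hk0 : k ≠ 0 := by omega
      simp [Polynomial.coeff_one, hk0]
    | 1 =>
      intro k hk
      rw [hP1]
      have hk1 : k ≠ 1 := by omega
      simp [Polynomial.coeff_X, Ne.symm hk1]
    | (K + 2) =>
      intro k hk
      rw [hrec (K + 1) (by omega)]
      simp only [Nat.add_sub_cancel]
      rw [Polynomial.coeff_sub, Polynomial.coeff_C_mul]
      match k with
      | 0 =>
        rw [Polynomial.mul_coeff_zero, Polynomial.coeff_X_zero, zero_mul,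
          ih K (by omega) 0 (by omega), mul_zero, sub_zero]
      | (k + 1) =>
        rw [Polynomial.coeff_X_mul, ih (K + 1) (by omega) k (by omega),
          ih K (by omega) (k + 1) (by omega), mul_zero, sub_zero]

lemma expand_general
    (hmon : ∀ n, (P lam t n).Monic) (hdeg : ∀ n, (P lam t n).natDegree = n)
    (hP0 : P lam t 0 = 1) (hP1 : P lam t 1 = Polynomial.X)
    (hrec : ∀ n, 1 ≤ n → P lam t (n + 1) =
      Polynomial.X * P lam t n - Polynomial.C (β lam t n) * P lam t (n - 1))
    (ε : ℕ) (hε : ε ≤ 1) :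
    ∀ N (p : Polynomial ℝ), (∀ k, p.coeff k ≠ 0 → ∃ l, l ≤ N ∧ k = 2 * l + ε) →
      ∃ c : ℕ → ℝ, c N = p.coeff (2 * N + ε) ∧
        p = ∑ l ∈ Finset.range (N + 1), Polynomial.C (c l) * P lam t (2 * l + ε) := by
  have hpar := parity_coeff P β hP0 hP1 hrec
  intro N
  induction N using Nat.strong_induction_on with
  | _ N ih =>
    intro p hp
    set a := p.coeff (2 * N + ε) with ha
    set r := p - Polynomial.C a * P lam t (2 * N + ε) with hr
    have hreq : p = Polynomial.C a * P lam t (2 * N + ε) + r := by rw [hr]; ring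
    have hrcoeff : ∀ k, r.coeff k ≠ 0 → (∃ l, l ≤ N ∧ k = 2 * l + ε) ∧ k ≠ 2 * N + ε := by
      intro k hk
      constructor
      · by_cases hpk : p.coeff k ≠ 0
        · exact hp k hpk
        · push_neg at hpk
          rw [hr, Polynomial.coeff_sub, hpk, Polynomial.coeff_C_mul, zero_sub, neg_ne_zero] at hk
          have hPk : (P lam t (2 * N + ε)).coeff k ≠ 0 := by
            intro h; rw [h, mul_zero] at hk; exact hk rfl
          have hkle : k ≤ 2 * N + ε := by
            by_contra hgt
            exact hPk (Polynomial.coeff_eq_zero_of_natDegree_lt (by rw [hdeg]; omega))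
          have hkpar : (k + (2 * N + ε)) % 2 ≠ 1 := fun h => hPk (hpar (2 * N + ε) k h)
          exact ⟨(k - ε) / 2, by omega, by omega⟩
      · intro hke
        rw [hr, Polynomial.coeff_sub, hke, Polynomial.coeff_C_mul, ← ha] at hk
        have : (P lam t (2 * N + ε)).coeff (2 * N + ε) = 1 := by
          have := (hmon (2 * N + ε)).coeff_natDegree
          rwa [hdeg] at this
        rw [this, mul_one, sub_self] at hk
        exact hk rfl
    match N with
    | 0 =>
      have hr0 : r = 0 := by
        ext k
        by_cases hk : r.coeff k = 0
        · simp [hk]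
        · obtain ⟨⟨l, hl, hkl⟩, hne⟩ := hrcoeff k hk
          omega
      refine ⟨fun _ => a, rfl, ?_⟩
      rw [hreq, hr0, add_zero]
      simp
    | (N + 1) =>
      obtain ⟨c', hc'1, hc'2⟩ := ih N (by omega) r (by
        intro k hk
        obtain ⟨⟨l, hl, hkl⟩, hne⟩ := hrcoeff k hk
        exact ⟨l, by omega, hkl⟩)
      refine ⟨fun l => if l = N + 1 then a else c' l, by simp, ?_⟩
      simp only [Finset.sum_range_succ, if_true]
      rw [if_neg (by omega : ¬ N = N + 1)]
      have hinner : ∑ x ∈ Finset.range N,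
          Polynomial.C (if x = N + 1 then a else c' x) * P lam t (2 * x + ε)
          = ∑ x ∈ Finset.range N, Polynomial.C (c' x) * P lam t (2 * x + ε) := by
        refine Finset.sum_congr rfl fun l hl => ?_
        rw [Finset.mem_range] at hl
        rw [if_neg (by omega)]
      rw [hinner, ← Finset.sum_range_succ, ← hc'2, hreq]
      ring

lemma gamma_coeff
    (hmon : ∀ n, (P lam t n).Monic) (hdeg : ∀ n, (P lam t n).natDegree = n)
    (hP0 : P lam t 0 = 1) (hP1 : P lam t 1 = Polynomial.X)
    (hrec : ∀ n, 1 ≤ n → P lam t (n + 1) =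
      Polynomial.X * P lam t n - Polynomial.C (β lam t n) * P lam t (n - 1)) :
    ∀ k, (P lam t (k + 2)).coeff k = -∑ j ∈ Finset.Icc 1 (k + 1), β lam t j := by
  intro k
  induction k with
  | zero =>
    rw [hrec 1 le_rfl]
    simp only [Nat.sub_self, hP0, hP1]
    rw [Polynomial.coeff_sub, Polynomial.mul_coeff_zero, Polynomial.coeff_X_zero,
      Polynomial.coeff_C_mul]
    simp
  | succ k ihk =>
    have h2 : P lam t (k + 3) = Polynomial.X * P lam t (k + 2) -
        Polynomial.C (β lam t (k + 2)) * P lam t (k + 1) := by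
      have := hrec (k + 2) (by omega)
      simpa using this
    rw [show k + 1 + 2 = k + 3 by omega, h2, Polynomial.coeff_sub, Polynomial.coeff_X_mul,
      Polynomial.coeff_C_mul, ihk]
    have hlc : (P lam t (k + 1)).coeff (k + 1) = 1 := by
      have := (hmon (k + 1)).coeff_natDegree
      rwa [hdeg] at this
    rw [hlc, mul_one, Finset.sum_Icc_succ_top (by omega : 1 ≤ k + 2)]
    ring

lemma h_pos (hm : 2 ≤ m) (hlam : -1 < lam)
    (p : Polynomial ℝ) (hp : p ≠ 0) :
    0 < freudPhi m lam t p p := by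
  have hnn : ∀ x : ℝ, 0 ≤ p.eval x * p.eval x * freudWeight m lam t x := fun x =>
    mul_nonneg (mul_self_nonneg _) (freudWeight_nonneg m lam t x)
  have hint : Integrable fun x : ℝ => p.eval x * p.eval x * freudWeight m lam t x :=
    integrable_mul_eval_freud hm hlam t p p
  rw [freudPhi, MeasureTheory.integral_pos_iff_support_of_nonneg hnn hint]
  set f := fun x : ℝ => p.eval x * p.eval x * freudWeight m lam t x with hf
  have hcover : (Set.univ : Set ℝ) ⊆
      ({x : ℝ | p.IsRoot x} ∪ {(0:ℝ)}) ∪ Function.support f := by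
    intro x _
    by_cases hroot : p.eval x = 0
    · exact Set.mem_union_left _ (Set.mem_union_left _ hroot)
    · by_cases hx0 : x = 0
      · exact Set.mem_union_left _ (Set.mem_union_right _ (by simp [hx0]))
      · refine Set.mem_union_right _ ?_
        simp only [Function.mem_support, hf]
        exact mul_ne_zero (mul_ne_zero hroot hroot)
          (ne_of_gt (freudWeight_pos m lam t hx0))
  have hfin : volume ({x : ℝ | p.IsRoot x} ∪ {(0:ℝ)}) = 0 := by
    apply measure_union_null
    · exact Set.Finite.measure_zero (Polynomial.finite_setOf_isRoot hp) volume
    · exact measure_singleton 0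
  rw [pos_iff_ne_zero]
  intro h0
  have hle : volume (Set.univ : Set ℝ) ≤ 0 := by
    calc volume (Set.univ : Set ℝ)
        ≤ volume (({x : ℝ | p.IsRoot x} ∪ {(0:ℝ)}) ∪ Function.support f) :=
          measure_mono hcover
      _ ≤ volume ({x : ℝ | p.IsRoot x} ∪ {(0:ℝ)}) + volume (Function.support f) :=
          measure_union_le _ _
      _ ≤ 0 := by rw [hfin, h0]; simp
  rw [Real.volume_univ] at hle
  simp at hle

lemma h_step (hm : 2 ≤ m) (hlam : -1 < lam)
    (hmon : ∀ n, (P lam t n).Monic) (hdeg : ∀ n, (P lam t n).natDegree = n)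
    (horth : ∀ j k, j ≠ k → freudPhi m lam t (P lam t j) (P lam t k) = 0)
    (hrec : ∀ n, 1 ≤ n → P lam t (n + 1) =
      Polynomial.X * P lam t n - Polynomial.C (β lam t n) * P lam t (n - 1))
    (k : ℕ) (hk : 1 ≤ k) :
    freudPhi m lam t (P lam t k) (P lam t k) =
      β lam t k * freudPhi m lam t (P lam t (k - 1)) (P lam t (k - 1)) := by
  have hXq : Polynomial.X * P lam t k =
      P lam t (k + 1) + Polynomial.C (β lam t k) * P lam t (k - 1) := by
    rw [hrec k hk]; ring
  have hswap : ∀ p q : Polynomial ℝ,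
      freudPhi m lam t p (Polynomial.X * q) = freudPhi m lam t q (Polynomial.X * p) := by
    intro p q; unfold freudPhi; congr 1; funext x
    simp only [Polynomial.eval_mul, Polynomial.eval_X]; ring
  have h1 : freudPhi m lam t (P lam t (k - 1)) (Polynomial.X * P lam t k)
      = β lam t k * freudPhi m lam t (P lam t (k - 1)) (P lam t (k - 1)) := by
    rw [hXq, freudPhi_add_right hm hlam, freudPhi_C_mul_right,
      horth (k - 1) (k + 1) (by omega), zero_add]
  have h2 : freudPhi m lam t (P lam t (k - 1)) (Polynomial.X * P lam t k)
      = freudPhi m lam t (P lam t k) (P lam t k) := by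
    rw [hswap]
    apply freudPhi_P_monic P hm hlam hmon hdeg horth
    · exact Polynomial.monic_X.mul (hmon (k - 1))
    · rw [Polynomial.Monic.natDegree_mul Polynomial.monic_X (hmon (k - 1)),
        Polynomial.natDegree_X, hdeg]
      omega
  rw [← h2, h1]

lemma det_eval (hm : 2 ≤ m) (hlam : -1 < lam)
    (hmon : ∀ n, (P lam t n).Monic) (hdeg : ∀ n, (P lam t n).natDegree = n)
    (horth : ∀ j k, j ≠ k → freudPhi m lam t (P lam t j) (P lam t k) = 0)
    (ε N n : ℕ) (hn : 1 ≤ n) (hNn : n - 1 ≤ N)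
    (cc : ℕ → ℕ → ℝ) (hcc1 : ∀ K, cc K K = 1)
    (hcc2 : ∀ K, (Polynomial.X : Polynomial ℝ) ^ (2 * K + ε) =
      ∑ l ∈ Finset.range (K + 1), Polynomial.C (cc K l) * P lam t (2 * l + ε)) :
    Matrix.det (Matrix.of fun i j : Fin n =>
      freudPhi m lam t (Polynomial.X ^ (2 * (if (i : ℕ) = n - 1 then N else (i : ℕ)) + ε))
        (Polynomial.X ^ (2 * (j : ℕ) + ε)))
    = cc N (n - 1) *
        ∏ l ∈ Finset.range n, freudPhi m lam t (P lam t (2 * l + ε)) (P lam t (2 * l + ε)) := by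
  classical
  set r : Fin n → ℕ := fun i => if (i : ℕ) = n - 1 then N else (i : ℕ) with hrdef
  set A : Matrix (Fin n) (Fin n) ℝ := Matrix.of fun i l =>
    if (l : ℕ) ≤ r i then cc (r i) (l : ℕ) else 0 with hA
  set Q : Matrix (Fin n) (Fin n) ℝ := Matrix.of fun l j =>
    freudPhi m lam t (P lam t (2 * (l : ℕ) + ε)) (Polynomial.X ^ (2 * (j : ℕ) + ε)) with hQ
  have horthX : ∀ l j : ℕ, j < l →
      freudPhi m lam t (P lam t (2 * l + ε)) (Polynomial.X ^ (2 * j + ε)) = 0 := by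
    intro l j hlj
    apply orth_lower P hm hlam hmon hdeg horth
    rw [Polynomial.degree_X_pow]
    exact_mod_cast (by omega : 2 * j + ε < 2 * l + ε)
  have hentry : ∀ (K : ℕ) (j : Fin n),
      freudPhi m lam t (Polynomial.X ^ (2 * K + ε)) (Polynomial.X ^ (2 * (j : ℕ) + ε))
      = ∑ l : Fin n, (if (l : ℕ) ≤ K then cc K (l : ℕ) else 0) * Q l j := by
    intro K j
    set F : ℕ → ℝ := fun l => (if l ≤ K then cc K l else 0) *
      freudPhi m lam t (P lam t (2 * l + ε)) (Polynomial.X ^ (2 * (j : ℕ) + ε)) with hF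
    have e1 : freudPhi m lam t (Polynomial.X ^ (2 * K + ε)) (Polynomial.X ^ (2 * (j : ℕ) + ε))
        = ∑ l ∈ Finset.range (K + 1), F l := by
      rw [freudPhi_comm, hcc2 K, freudPhi_sum_right hm hlam]
      refine Finset.sum_congr rfl fun l hl => ?_
      rw [Finset.mem_range] at hl
      rw [freudPhi_C_mul_right, hF]
      simp only [if_pos (by omega : l ≤ K)]
      rw [freudPhi_comm]
    have e2 : ∑ l ∈ Finset.range (K + 1), F l = ∑ l ∈ Finset.range n, F l := by
      rcases le_total (K + 1) n with h | h
      · refine Finset.sum_subset (Finset.range_subset_range.mpr h) fun x _ hx => ?_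
        rw [Finset.mem_range, not_lt] at hx
        rw [hF]
        simp only [if_neg (by omega : ¬ x ≤ K), zero_mul]
      · refine (Finset.sum_subset (Finset.range_subset_range.mpr h) fun x _ hx => ?_).symm
        rw [Finset.mem_range, not_lt] at hx
        rw [hF]
        simp only [horthX x (j : ℕ) (by have := j.isLt; omega), mul_zero]
    rw [e1, e2, ← Fin.sum_univ_eq_sum_range F n]
    rfl
  have hMQ : (Matrix.of fun i j : Fin n =>
      freudPhi m lam t (Polynomial.X ^ (2 * r i + ε)) (Polynomial.X ^ (2 * (j : ℕ) + ε)))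
      = A * Q := by
    ext i j
    rw [Matrix.mul_apply]
    exact hentry (r i) j
  rw [show (Matrix.of fun i j : Fin n =>
      freudPhi m lam t (Polynomial.X ^ (2 * (if (i : ℕ) = n - 1 then N else (i : ℕ)) + ε))
        (Polynomial.X ^ (2 * (j : ℕ) + ε))) = A * Q from hMQ, Matrix.det_mul]
  have hdetA : A.det = cc N (n - 1) := by
    rw [Matrix.det_of_lowerTriangular]
    · rw [Finset.prod_eq_single (⟨n - 1, by omega⟩ : Fin n)]
      · show (if ((n:ℕ) - 1 ≤ r ⟨n - 1, by omega⟩) then cc (r ⟨n - 1, by omega⟩) (n - 1) else 0)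
          = cc N (n - 1)
        have hrl : r ⟨n - 1, by omega⟩ = N := by rw [hrdef]; simp
        rw [hrl, if_pos hNn]
      · intro i _ hine
        have hi : (i : ℕ) ≠ n - 1 := by
          intro h; apply hine; apply Fin.ext; simpa using h
        show (if ((i:ℕ) ≤ r i) then cc (r i) (i : ℕ) else 0) = 1
        have hri : r i = (i : ℕ) := by rw [hrdef]; simp [hi]
        rw [hri, if_pos le_rfl, hcc1]
      · intro h; exact absurd (Finset.mem_univ _) h
    · intro i j hij
      have hij' : i < j := hij
      have hjlt : (j : ℕ) < n := j.isLt
      have hilt : (i : ℕ) < (j : ℕ) := hij'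
      by_cases hi : (i : ℕ) = n - 1
      · omega
      · show (if ((j:ℕ) ≤ r i) then cc (r i) (j : ℕ) else 0) = 0
        have hri : r i = (i : ℕ) := by rw [hrdef]; simp [hi]
        rw [hri, if_neg (by omega)]
  have hdetQ : Q.det =
      ∏ l ∈ Finset.range n, freudPhi m lam t (P lam t (2 * l + ε)) (P lam t (2 * l + ε)) := by
    rw [Matrix.det_of_upperTriangular]
    · rw [← Fin.prod_univ_eq_prod_range]
      refine Finset.prod_congr rfl fun l _ => ?_
      exact freudPhi_P_monic P hm hlam hmon hdeg horth _ _ (Polynomial.monic_X_pow _)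
        (Polynomial.natDegree_X_pow _)
    · intro l j hlj
      exact horthX (l : ℕ) (j : ℕ) hlj
  rw [hdetA, hdetQ]

end OPS

lemma moment_eq_phi (m : ℕ) (lam t : ℝ) (a b : ℕ) :
    freudPhi m lam t (Polynomial.X ^ a) (Polynomial.X ^ b) = freudMoment m lam (a + b) t := by
  unfold freudPhi freudMoment
  congr 1; funext x
  rw [Polynomial.eval_pow, Polynomial.eval_pow, Polynomial.eval_X, pow_add]

lemma moment_shift (m : ℕ) (lam : ℝ) (k : ℕ) (t : ℝ) :
    freudMoment m (lam + 1) k t = freudMoment m lam (k + 2) t := by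
  unfold freudMoment freudWeight
  apply integral_congr_ae
  filter_upwards [ae_ne_zero] with x hx
  have hax : 0 < |x| := abs_pos.mpr hx
  have h1 : |x| ^ (2 * (lam + 1) + 1) = |x| ^ (2 * lam + 1) * x ^ 2 := by
    have : 2 * (lam + 1) + 1 = (2 * lam + 1) + (2 : ℕ) := by push_cast; ring
    rw [this, Real.rpow_add hax, Real.rpow_natCast, sq_abs]
  rw [h1, pow_add]
  ring

/-! ### Derivatives -/

lemma hasDerivAt_moment {m : ℕ} (hm : 2 ≤ m) {lam : ℝ} (hlam : -1 < lam) (k : ℕ) (t : ℝ) :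
    HasDerivAt (freudMoment m lam k) (freudMoment m lam (k + 2) t) t := by
  have hsexp : (-1 : ℝ) < ((k + 2 : ℕ) : ℝ) + (2 * lam + 1) := by
    have : (0:ℝ) ≤ ((k + 2 : ℕ) : ℝ) := Nat.cast_nonneg _
    linarith
  have key := hasDerivAt_integral_of_dominated_loc_of_deriv_le (μ := volume)
    (F := fun (s : ℝ) (x : ℝ) => x ^ k * freudWeight m lam s x)
    (F' := fun (s : ℝ) (x : ℝ) => x ^ (k + 2) * freudWeight m lam s x)
    (x₀ := t)
    (bound := fun x => Real.exp (((|t| + 1) + 1) ^ 2) *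
      (|x| ^ (((k + 2 : ℕ) : ℝ) + (2 * lam + 1)) * Real.exp (-x ^ 2)))
    (Metric.ball_mem_nhds t one_pos)
    (Filter.Eventually.of_forall fun s =>
      (measurable_pow_freudWeight m lam s k).aestronglyMeasurable)
    (integrable_pow_freud hm hlam t k)
    ((measurable_pow_freudWeight m lam t (k + 2)).aestronglyMeasurable)
    (by
      filter_upwards [ae_ne_zero] with x hx
      intro s hs
      have hsle : |s| ≤ |t| + 1 := by
        rw [Metric.mem_ball, Real.dist_eq] at hs
        have h2 := abs_sub_abs_le_abs_sub s t
        linarith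
      exact freud_bound hm lam (k + 2) hsle hx)
    ((integrable_abs_rpow_mul_exp hsexp).const_mul _)
    (by
      refine Filter.Eventually.of_forall fun x => fun s _ => ?_
      have h1 : HasDerivAt (fun s' : ℝ => s' * x ^ 2 - x ^ (2 * m)) (x ^ 2) s :=
        (hasDerivAt_mul_const (x ^ 2)).sub_const _
      have h2 := (h1.exp).const_mul (x ^ k * |x| ^ (2 * lam + 1))
      have hfun : (fun s' : ℝ => x ^ k * freudWeight m lam s' x)
          = fun s' : ℝ => (x ^ k * |x| ^ (2 * lam + 1)) *
              Real.exp (s' * x ^ 2 - x ^ (2 * m)) := by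
        funext s'; unfold freudWeight; ring
      rw [hfun]
      refine h2.congr_deriv (Eq.symm ?_)
      show x ^ (k + 2) * (|x| ^ (2 * lam + 1) * Real.exp (s * x ^ 2 - x ^ (2 * m)))
          = x ^ k * |x| ^ (2 * lam + 1) * (Real.exp (s * x ^ 2 - x ^ (2 * m)) * x ^ 2)
      rw [pow_add]
      ring)
  exact key.2

lemma hasDerivAt_det {n : ℕ} (M : ℝ → Matrix (Fin n) (Fin n) ℝ) (M' : Matrix (Fin n) (Fin n) ℝ)
    (t : ℝ) (h : ∀ i j, HasDerivAt (fun s => M s i j) (M' i j) t) :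
    HasDerivAt (fun s => (M s).det)
      (∑ i : Fin n, ((M t).updateRow i (M' i)).det) t := by
  classical
  have hprod : ∀ σ : Equiv.Perm (Fin n), HasDerivAt (fun s => ∏ i : Fin n, M s (σ i) i)
      (∑ i : Fin n, (∏ j ∈ Finset.univ.erase i, M t (σ j) j) • M' (σ i) i) t :=
    fun σ => HasDerivAt.fun_finsetProd fun i _ => h (σ i) i
  have hsum : HasDerivAt (fun s => ∑ σ : Equiv.Perm (Fin n),
      ((Equiv.Perm.sign σ : ℤ) : ℝ) * ∏ i : Fin n, M s (σ i) i)
      (∑ σ : Equiv.Perm (Fin n), ((Equiv.Perm.sign σ : ℤ) : ℝ) *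
        ∑ i : Fin n, (∏ j ∈ Finset.univ.erase i, M t (σ j) j) • M' (σ i) i) t :=
    HasDerivAt.fun_sum fun σ _ => (hprod σ).const_mul _
  have hfun : (fun s => (M s).det) = fun s => ∑ σ : Equiv.Perm (Fin n),
      ((Equiv.Perm.sign σ : ℤ) : ℝ) * ∏ i : Fin n, M s (σ i) i := by
    funext s; rw [Matrix.det_apply']
  have hval : ∑ i : Fin n, ((M t).updateRow i (M' i)).det
      = ∑ σ : Equiv.Perm (Fin n), ((Equiv.Perm.sign σ : ℤ) : ℝ) *
          ∑ i : Fin n, (∏ j ∈ Finset.univ.erase i, M t (σ j) j) • M' (σ i) i := by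
    simp_rw [Matrix.det_apply', Finset.mul_sum]
    rw [Finset.sum_comm]
    refine Finset.sum_congr rfl fun σ _ => ?_
    rw [← Equiv.sum_comp σ (fun i => ((Equiv.Perm.sign σ : ℤ) : ℝ) *
      ∏ j : Fin n, ((M t).updateRow i (M' i)) (σ j) j)]
    refine Finset.sum_congr rfl fun i _ => ?_
    rw [smul_eq_mul]
    congr 1
    rw [← Finset.mul_prod_erase Finset.univ
      (fun j => ((M t).updateRow (σ i) (M' (σ i))) (σ j) j) (Finset.mem_univ i),
      Matrix.updateRow_self, mul_comm]
    congr 1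
    refine Finset.prod_congr rfl fun j hj => ?_
    exact congrFun (Matrix.updateRow_ne (σ.injective.ne (Finset.ne_of_mem_erase hj))) j
  rw [hfun, hval]
  exact hsum

section Assembly

variable {m : ℕ} {lam t : ℝ} (P : ℝ → ℝ → ℕ → Polynomial ℝ) (β : ℝ → ℝ → ℕ → ℝ)

lemma exists_cc
    (hmon : ∀ n, (P lam t n).Monic) (hdeg : ∀ n, (P lam t n).natDegree = n)
    (hP0 : P lam t 0 = 1) (hP1 : P lam t 1 = Polynomial.X)
    (hrec : ∀ n, 1 ≤ n → P lam t (n + 1) =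
      Polynomial.X * P lam t n - Polynomial.C (β lam t n) * P lam t (n - 1))
    (ε : ℕ) (hε : ε ≤ 1) :
    ∃ cc : ℕ → ℕ → ℝ, (∀ K, cc K K = 1) ∧
      ∀ K, (Polynomial.X : Polynomial ℝ) ^ (2 * K + ε) =
        ∑ l ∈ Finset.range (K + 1), Polynomial.C (cc K l) * P lam t (2 * l + ε) := by
  have h := fun K => expand_general P β hmon hdeg hP0 hP1 hrec ε hε K
    ((Polynomial.X : Polynomial ℝ) ^ (2 * K + ε)) (by
      intro k hk
      rw [Polynomial.coeff_X_pow] at hk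
      by_cases hke : k = 2 * K + ε
      · exact ⟨K, le_rfl, hke⟩
      · rw [if_neg hke] at hk; exact absurd rfl hk)
  choose cc h1 h2 using h
  refine ⟨cc, fun K => ?_, h2⟩
  rw [h1 K, Polynomial.coeff_X_pow, if_pos rfl]

lemma cc_val
    (hmon : ∀ n, (P lam t n).Monic) (hdeg : ∀ n, (P lam t n).natDegree = n)
    (hP0 : P lam t 0 = 1) (hP1 : P lam t 1 = Polynomial.X)
    (hrec : ∀ n, 1 ≤ n → P lam t (n + 1) =
      Polynomial.X * P lam t n - Polynomial.C (β lam t n) * P lam t (n - 1))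
    (ε : ℕ) (cc : ℕ → ℕ → ℝ) (hcc1 : ∀ K, cc K K = 1)
    (hcc2 : ∀ K, (Polynomial.X : Polynomial ℝ) ^ (2 * K + ε) =
      ∑ l ∈ Finset.range (K + 1), Polynomial.C (cc K l) * P lam t (2 * l + ε))
    (n : ℕ) (hn : 1 ≤ n) :
    cc n (n - 1) = ∑ j ∈ Finset.Icc 1 (2 * n - 1 + ε), β lam t j := by
  obtain ⟨n', rfl⟩ : ∃ n', n = n' + 1 := ⟨n - 1, by omega⟩
  have h := congrArg (fun p : Polynomial ℝ => p.coeff (2 * n' + ε)) (hcc2 (n' + 1))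
  rw [Polynomial.coeff_X_pow, if_neg (by omega), Polynomial.finset_sum_coeff] at h
  simp_rw [Polynomial.coeff_C_mul] at h
  rw [Finset.sum_range_succ, Finset.sum_range_succ] at h
  have hz : ∑ l ∈ Finset.range n', cc (n' + 1) l * (P lam t (2 * l + ε)).coeff (2 * n' + ε)
      = 0 := by
    refine Finset.sum_eq_zero fun l hl => ?_
    rw [Finset.mem_range] at hl
    rw [Polynomial.coeff_eq_zero_of_natDegree_lt (by rw [hdeg]; omega), mul_zero]
  have hdiag : (P lam t (2 * n' + ε)).coeff (2 * n' + ε) = 1 := by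
    have := (hmon (2 * n' + ε)).coeff_natDegree
    rwa [hdeg] at this
  have hgam : (P lam t (2 * (n' + 1) + ε)).coeff (2 * n' + ε)
      = -∑ j ∈ Finset.Icc 1 (2 * n' + ε + 1), β lam t j := by
    have hg := gamma_coeff P β hmon hdeg hP0 hP1 hrec (2 * n' + ε)
    rw [show 2 * (n' + 1) + ε = (2 * n' + ε) + 2 by omega]
    exact hg
  rw [hz, hdiag, hcc1, hgam] at h
  have e1 : n' + 1 - 1 = n' := by omega
  have e2 : 2 * (n' + 1) - 1 + ε = 2 * n' + ε + 1 := by omega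
  rw [e1, e2]
  linarith

lemma hankel_even_eq (hm : 2 ≤ m) (hlam : -1 < lam)
    (hmon : ∀ n, (P lam t n).Monic) (hdeg : ∀ n, (P lam t n).natDegree = n)
    (horth : ∀ j k, j ≠ k → freudPhi m lam t (P lam t j) (P lam t k) = 0)
    (hP0 : P lam t 0 = 1) (hP1 : P lam t 1 = Polynomial.X)
    (hrec : ∀ n, 1 ≤ n → P lam t (n + 1) =
      Polynomial.X * P lam t n - Polynomial.C (β lam t n) * P lam t (n - 1))
    (n : ℕ) :
    hankelA m lam n t
      = ∏ l ∈ Finset.range n, freudPhi m lam t (P lam t (2 * l)) (P lam t (2 * l)) := by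
  rcases Nat.eq_zero_or_pos n with rfl | hn
  · simp [hankelA, Matrix.det_fin_zero]
  · obtain ⟨cc, hcc1, hcc2⟩ := exists_cc P β hmon hdeg hP0 hP1 hrec 0 (by omega)
    have hmat : (Matrix.of fun i j : Fin n => freudMoment m lam (2 * ((i:ℕ) + (j:ℕ))) t)
        = Matrix.of fun i j : Fin n => freudPhi m lam t
            (Polynomial.X ^ (2 * (if (i:ℕ) = n - 1 then n - 1 else (i:ℕ)) + 0))
            (Polynomial.X ^ (2 * (j:ℕ) + 0)) := by
      ext i j
      have hif : (if (i:ℕ) = n - 1 then n - 1 else (i:ℕ)) = (i:ℕ) := by split <;> omega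
      rw [Matrix.of_apply, Matrix.of_apply, hif,
        show 2 * ((i:ℕ) + (j:ℕ)) = (2 * (i:ℕ) + 0) + (2 * (j:ℕ) + 0) by ring,
        ← moment_eq_phi m lam t]
    unfold hankelA
    rw [hmat, det_eval P hm hlam hmon hdeg horth 0 (n-1) n hn le_rfl cc hcc1 hcc2, hcc1, one_mul]
    refine Finset.prod_congr rfl fun l _ => ?_
    norm_num

lemma hankel_odd_eq (hm : 2 ≤ m) (hlam : -1 < lam)
    (hmon : ∀ n, (P lam t n).Monic) (hdeg : ∀ n, (P lam t n).natDegree = n)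
    (horth : ∀ j k, j ≠ k → freudPhi m lam t (P lam t j) (P lam t k) = 0)
    (hP0 : P lam t 0 = 1) (hP1 : P lam t 1 = Polynomial.X)
    (hrec : ∀ n, 1 ≤ n → P lam t (n + 1) =
      Polynomial.X * P lam t n - Polynomial.C (β lam t n) * P lam t (n - 1))
    (n : ℕ) :
    hankelA m (lam + 1) n t
      = ∏ l ∈ Finset.range n,
          freudPhi m lam t (P lam t (2 * l + 1)) (P lam t (2 * l + 1)) := by
  rcases Nat.eq_zero_or_pos n with rfl | hn
  · simp [hankelA, Matrix.det_fin_zero]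
  · obtain ⟨cc, hcc1, hcc2⟩ := exists_cc P β hmon hdeg hP0 hP1 hrec 1 le_rfl
    have hmat : (Matrix.of fun i j : Fin n => freudMoment m (lam + 1) (2 * ((i:ℕ) + (j:ℕ))) t)
        = Matrix.of fun i j : Fin n => freudPhi m lam t
            (Polynomial.X ^ (2 * (if (i:ℕ) = n - 1 then n - 1 else (i:ℕ)) + 1))
            (Polynomial.X ^ (2 * (j:ℕ) + 1)) := by
      ext i j
      have hif : (if (i:ℕ) = n - 1 then n - 1 else (i:ℕ)) = (i:ℕ) := by split <;> omega
      rw [Matrix.of_apply, Matrix.of_apply, hif, moment_shift,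
        show 2 * ((i:ℕ) + (j:ℕ)) + 2 = (2 * (i:ℕ) + 1) + (2 * (j:ℕ) + 1) by ring,
        ← moment_eq_phi m lam t]
    unfold hankelA
    rw [hmat, det_eval P hm hlam hmon hdeg horth 1 (n-1) n hn le_rfl cc hcc1 hcc2, hcc1, one_mul]

lemma hankel_even_deriv (hm : 2 ≤ m) (hlam : -1 < lam)
    (hmon : ∀ n, (P lam t n).Monic) (hdeg : ∀ n, (P lam t n).natDegree = n)
    (horth : ∀ j k, j ≠ k → freudPhi m lam t (P lam t j) (P lam t k) = 0)
    (hP0 : P lam t 0 = 1) (hP1 : P lam t 1 = Polynomial.X)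
    (hrec : ∀ n, 1 ≤ n → P lam t (n + 1) =
      Polynomial.X * P lam t n - Polynomial.C (β lam t n) * P lam t (n - 1))
    (n : ℕ) :
    HasDerivAt (hankelA m lam n)
      ((∑ j ∈ Finset.Icc 1 (2 * n - 1), β lam t j) * hankelA m lam n t) t := by
  rcases Nat.eq_zero_or_pos n with rfl | hn
  · have h0 : hankelA m lam 0 = fun _ : ℝ => (1 : ℝ) :=
      funext fun s => Matrix.det_fin_zero
    rw [h0]
    refine (hasDerivAt_const t (1:ℝ)).congr_deriv ?_
    rw [show Finset.Icc 1 (2 * 0 - 1) = (∅ : Finset ℕ) from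
      Finset.Icc_eq_empty (by omega)]
    simp
  · have hD := hasDerivAt_det
      (fun s => Matrix.of fun i j : Fin n => freudMoment m lam (2 * ((i:ℕ) + (j:ℕ))) s)
      (Matrix.of fun i j : Fin n => freudMoment m lam (2 * ((i:ℕ) + (j:ℕ)) + 2) t) t
      (fun i j => hasDerivAt_moment hm hlam _ t)
    set M : Matrix (Fin n) (Fin n) ℝ :=
      Matrix.of fun i j : Fin n => freudMoment m lam (2 * ((i:ℕ) + (j:ℕ))) t with hM
    set M' : Matrix (Fin n) (Fin n) ℝ :=
      Matrix.of fun i j : Fin n => freudMoment m lam (2 * ((i:ℕ) + (j:ℕ)) + 2) t with hM'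
    refine hD.congr_deriv (Eq.symm ?_)
    show (∑ j ∈ Finset.Icc 1 (2 * n - 1), β lam t j) * hankelA m lam n t
        = ∑ i : Fin n, (M.updateRow i (M' i)).det
    set last : Fin n := ⟨n - 1, by omega⟩ with hlast
    have hzero : ∀ i : Fin n, i ≠ last → (M.updateRow i (M' i)).det = 0 := by
      intro i hi
      have hilt : (i : ℕ) < n - 1 := by
        have h1 := i.isLt
        have h2 : (i : ℕ) ≠ n - 1 := fun h => hi (Fin.ext (by simpa using h))
        omega
      refine Matrix.det_zero_of_row_eq
        (i := i) (j := ⟨(i:ℕ) + 1, by omega⟩) (by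
          intro h
          have := congrArg (fun z : Fin n => (z : ℕ)) h
          simp at this) ?_
      funext j
      have h1 : (M.updateRow i (M' i)) i j = M' i j := by rw [Matrix.updateRow_self]
      have h2 : (M.updateRow i (M' i)) ⟨(i:ℕ) + 1, by omega⟩ j
          = M ⟨(i:ℕ) + 1, by omega⟩ j := by
        rw [Matrix.updateRow_ne (by
          intro h
          have := congrArg (fun z : Fin n => (z : ℕ)) h
          simp at this)]
      rw [h1, h2, hM, hM']
      show freudMoment m lam (2 * ((i:ℕ) + (j:ℕ)) + 2) t
        = freudMoment m lam (2 * (((i:ℕ) + 1) + (j:ℕ))) t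
      congr 1
      omega
    rw [Finset.sum_eq_single last (fun i _ hi => hzero i hi)
      (fun h => absurd (Finset.mem_univ _) h)]
    obtain ⟨cc, hcc1, hcc2⟩ := exists_cc P β hmon hdeg hP0 hP1 hrec 0 (by omega)
    have hmat2 : M.updateRow last (M' last)
        = Matrix.of fun i j : Fin n => freudPhi m lam t
            (Polynomial.X ^ (2 * (if (i:ℕ) = n - 1 then n else (i:ℕ)) + 0))
            (Polynomial.X ^ (2 * (j:ℕ) + 0)) := by
      ext i j
      by_cases hi : i = last
      · subst hi
        rw [Matrix.updateRow_self, hM']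
        show freudMoment m lam (2 * (((last:ℕ)) + (j:ℕ)) + 2) t = _
        have hif : (if ((last:ℕ)) = n - 1 then n else ((last:ℕ))) = n := by
          rw [hlast]; simp
        rw [Matrix.of_apply, hif,
          show 2 * (((last:ℕ)) + (j:ℕ)) + 2 = (2 * n + 0) + (2 * (j:ℕ) + 0) by
            rw [hlast]; simp; omega,
          ← moment_eq_phi m lam t]
      · rw [Matrix.updateRow_ne hi, hM]
        have hif : (if ((i:ℕ)) = n - 1 then n else ((i:ℕ))) = (i:ℕ) := by
          rw [if_neg (fun h => hi (Fin.ext (by rw [hlast]; simpa using h)))]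
        show freudMoment m lam (2 * ((i:ℕ) + (j:ℕ))) t = _
        rw [Matrix.of_apply, hif,
          show 2 * ((i:ℕ) + (j:ℕ)) = (2 * (i:ℕ) + 0) + (2 * (j:ℕ) + 0) by ring,
          ← moment_eq_phi m lam t]
    rw [hmat2, det_eval P hm hlam hmon hdeg horth 0 n n hn (by omega) cc hcc1 hcc2,
      cc_val P β hmon hdeg hP0 hP1 hrec 0 cc hcc1 hcc2 n hn,
      hankel_even_eq P β hm hlam hmon hdeg horth hP0 hP1 hrec n]
    norm_num

lemma hankel_odd_deriv (hm : 2 ≤ m) (hlam : -1 < lam)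
    (hmon : ∀ n, (P lam t n).Monic) (hdeg : ∀ n, (P lam t n).natDegree = n)
    (horth : ∀ j k, j ≠ k → freudPhi m lam t (P lam t j) (P lam t k) = 0)
    (hP0 : P lam t 0 = 1) (hP1 : P lam t 1 = Polynomial.X)
    (hrec : ∀ n, 1 ≤ n → P lam t (n + 1) =
      Polynomial.X * P lam t n - Polynomial.C (β lam t n) * P lam t (n - 1))
    (n : ℕ) :
    HasDerivAt (hankelA m (lam + 1) n)
      ((∑ j ∈ Finset.Icc 1 (2 * n), β lam t j) * hankelA m (lam + 1) n t) t := by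
  have hlam1 : (-1 : ℝ) < lam + 1 := by linarith
  rcases Nat.eq_zero_or_pos n with rfl | hn
  · have h0 : hankelA m (lam + 1) 0 = fun _ : ℝ => (1 : ℝ) :=
      funext fun s => Matrix.det_fin_zero
    rw [h0]
    refine (hasDerivAt_const t (1:ℝ)).congr_deriv ?_
    rw [show Finset.Icc 1 (2 * 0) = (∅ : Finset ℕ) from
      Finset.Icc_eq_empty (by omega)]
    simp
  · have hD := hasDerivAt_det
      (fun s => Matrix.of fun i j : Fin n => freudMoment m (lam + 1) (2 * ((i:ℕ) + (j:ℕ))) s)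
      (Matrix.of fun i j : Fin n => freudMoment m (lam + 1) (2 * ((i:ℕ) + (j:ℕ)) + 2) t) t
      (fun i j => hasDerivAt_moment hm hlam1 _ t)
    set M : Matrix (Fin n) (Fin n) ℝ :=
      Matrix.of fun i j : Fin n => freudMoment m (lam + 1) (2 * ((i:ℕ) + (j:ℕ))) t with hM
    set M' : Matrix (Fin n) (Fin n) ℝ :=
      Matrix.of fun i j : Fin n => freudMoment m (lam + 1) (2 * ((i:ℕ) + (j:ℕ)) + 2) t with hM'
    refine hD.congr_deriv (Eq.symm ?_)
    show (∑ j ∈ Finset.Icc 1 (2 * n), β lam t j) * hankelA m (lam + 1) n t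
        = ∑ i : Fin n, (M.updateRow i (M' i)).det
    set last : Fin n := ⟨n - 1, by omega⟩ with hlast
    have hzero : ∀ i : Fin n, i ≠ last → (M.updateRow i (M' i)).det = 0 := by
      intro i hi
      have hilt : (i : ℕ) < n - 1 := by
        have h1 := i.isLt
        have h2 : (i : ℕ) ≠ n - 1 := fun h => hi (Fin.ext (by simpa using h))
        omega
      refine Matrix.det_zero_of_row_eq
        (i := i) (j := ⟨(i:ℕ) + 1, by omega⟩) (by
          intro h
          have := congrArg (fun z : Fin n => (z : ℕ)) h
          simp at this) ?_
      funext j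
      have h1 : (M.updateRow i (M' i)) i j = M' i j := by rw [Matrix.updateRow_self]
      have h2 : (M.updateRow i (M' i)) ⟨(i:ℕ) + 1, by omega⟩ j
          = M ⟨(i:ℕ) + 1, by omega⟩ j := by
        rw [Matrix.updateRow_ne (by
          intro h
          have := congrArg (fun z : Fin n => (z : ℕ)) h
          simp at this)]
      rw [h1, h2, hM, hM']
      show freudMoment m (lam + 1) (2 * ((i:ℕ) + (j:ℕ)) + 2) t
        = freudMoment m (lam + 1) (2 * (((i:ℕ) + 1) + (j:ℕ))) t
      congr 1
      omega
    rw [Finset.sum_eq_single last (fun i _ hi => hzero i hi)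
      (fun h => absurd (Finset.mem_univ _) h)]
    obtain ⟨cc, hcc1, hcc2⟩ := exists_cc P β hmon hdeg hP0 hP1 hrec 1 le_rfl
    have hmat2 : M.updateRow last (M' last)
        = Matrix.of fun i j : Fin n => freudPhi m lam t
            (Polynomial.X ^ (2 * (if (i:ℕ) = n - 1 then n else (i:ℕ)) + 1))
            (Polynomial.X ^ (2 * (j:ℕ) + 1)) := by
      ext i j
      by_cases hi : i = last
      · subst hi
        rw [Matrix.updateRow_self, hM']
        show freudMoment m (lam + 1) (2 * (((last:ℕ)) + (j:ℕ)) + 2) t = _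
        have hif : (if ((last:ℕ)) = n - 1 then n else ((last:ℕ))) = n := by
          rw [hlast]; simp
        rw [Matrix.of_apply, hif, moment_shift,
          show 2 * (((last:ℕ)) + (j:ℕ)) + 2 + 2 = (2 * n + 1) + (2 * (j:ℕ) + 1) by
            rw [hlast]; simp; omega,
          ← moment_eq_phi m lam t]
      · rw [Matrix.updateRow_ne hi, hM]
        have hif : (if ((i:ℕ)) = n - 1 then n else ((i:ℕ))) = (i:ℕ) := by
          rw [if_neg (fun h => hi (Fin.ext (by rw [hlast]; simpa using h)))]
        show freudMoment m (lam + 1) (2 * ((i:ℕ) + (j:ℕ))) t = _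
        rw [Matrix.of_apply, hif, moment_shift,
          show 2 * ((i:ℕ) + (j:ℕ)) + 2 = (2 * (i:ℕ) + 1) + (2 * (j:ℕ) + 1) by ring,
          ← moment_eq_phi m lam t]
    rw [hmat2, det_eval P hm hlam hmon hdeg horth 1 n n hn (by omega) cc hcc1 hcc2,
      cc_val P β hmon hdeg hP0 hP1 hrec 1 cc hcc1 hcc2 n hn,
      hankel_odd_eq P β hm hlam hmon hdeg horth hP0 hP1 hrec n]
    have : 2 * n - 1 + 1 = 2 * n := by omega
    rw [this]

end Assembly

lemma deriv_log_div (E D : ℝ → ℝ) {t a b : ℝ}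
    (hE : ∀ s, 0 < E s) (hD : ∀ s, 0 < D s)
    (hdE : HasDerivAt E (a * E t) t) (hdD : HasDerivAt D (b * D t) t) :
    deriv (fun s => Real.log (E s / D s)) t = a - b := by
  have hfun : (fun s => Real.log (E s / D s))
      = fun s => Real.log (E s) - Real.log (D s) :=
    funext fun s => Real.log_div (ne_of_gt (hE s)) (ne_of_gt (hD s))
  have h1 : HasDerivAt (fun s => Real.log (E s) - Real.log (D s))
      (a * E t / E t - b * D t / D t) t :=
    (hdE.log (ne_of_gt (hE t))).sub (hdD.log (ne_of_gt (hD t)))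
  rw [hfun, h1.deriv, mul_div_assoc, div_self (ne_of_gt (hE t)),
    mul_div_assoc, div_self (ne_of_gt (hD t)), mul_one, mul_one]

/-- For `λ > −1`, `t ∈ ℝ` and integer `m ≥ 2`, in terms of the Hankel
determinants `𝒜_n(t;λ)` of even moments, the recurrence coefficients of the monic orthogonal
polynomials of the generalised higher order Freud weight satisfy
`β_{2n}(t;λ) = 𝒜_{n+1}(t;λ)𝒜_{n−1}(t;λ+1)/(𝒜_n(t;λ)𝒜_n(t;λ+1)) = (d/dt) ln(𝒜_n(t;λ+1)/𝒜_n(t;λ))`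
and
`β_{2n+1}(t;λ) = 𝒜_n(t;λ)𝒜_{n+1}(t;λ+1)/(𝒜_{n+1}(t;λ)𝒜_n(t;λ+1)) = (d/dt) ln(𝒜_{n+1}(t;λ)/𝒜_n(t;λ+1))`. -/
theorem recurrence_coefficients_hankel (m : ℕ) (hm : 2 ≤ m)
    (P : ℝ → ℝ → ℕ → Polynomial ℝ) (β : ℝ → ℝ → ℕ → ℝ)
    (hmonic : ∀ lam, -1 < lam → ∀ t n, (P lam t n).Monic)
    (hdeg : ∀ lam, -1 < lam → ∀ t n, (P lam t n).natDegree = n)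
    (horth : ∀ lam, -1 < lam → ∀ t, ∀ j k, j ≠ k →
      ∫ x : ℝ, (P lam t j).eval x * (P lam t k).eval x * freudWeight m lam t x = 0)
    (hβpos : ∀ lam, -1 < lam → ∀ t n, 1 ≤ n → 0 < β lam t n)
    (hP0 : ∀ lam, -1 < lam → ∀ t, P lam t 0 = 1)
    (hP1 : ∀ lam, -1 < lam → ∀ t, P lam t 1 = X)
    (hrec : ∀ lam, -1 < lam → ∀ t n, 1 ≤ n →
      P lam t (n + 1) = X * P lam t n - C (β lam t n) * P lam t (n - 1)) :
    ∀ lam, -1 < lam → ∀ (t : ℝ) (n : ℕ),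
      (1 ≤ n →
        β lam t (2 * n) =
          hankelA m lam (n + 1) t * hankelA m (lam + 1) (n - 1) t /
            (hankelA m lam n t * hankelA m (lam + 1) n t) ∧
        β lam t (2 * n) =
          deriv (fun s => Real.log (hankelA m (lam + 1) n s / hankelA m lam n s)) t) ∧
      (β lam t (2 * n + 1) =
          hankelA m lam n t * hankelA m (lam + 1) (n + 1) t /
            (hankelA m lam (n + 1) t * hankelA m (lam + 1) n t) ∧
        β lam t (2 * n + 1) =
          deriv (fun s => Real.log (hankelA m lam (n + 1) s / hankelA m (lam + 1) n s)) t) := by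
  intro lam hlam t n
  have horth' : ∀ s : ℝ, ∀ j k, j ≠ k →
      freudPhi m lam s (P lam s j) (P lam s k) = 0 := fun s j k h => horth lam hlam s j k h
  have Heven : ∀ (s : ℝ) (N : ℕ), hankelA m lam N s
      = ∏ l ∈ Finset.range N, freudPhi m lam s (P lam s (2 * l)) (P lam s (2 * l)) :=
    fun s N => hankel_even_eq P β hm hlam (hmonic lam hlam s) (hdeg lam hlam s) (horth' s)
      (hP0 lam hlam s) (hP1 lam hlam s) (hrec lam hlam s) N
  have Hodd : ∀ (s : ℝ) (N : ℕ), hankelA m (lam + 1) N s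
      = ∏ l ∈ Finset.range N, freudPhi m lam s (P lam s (2 * l + 1)) (P lam s (2 * l + 1)) :=
    fun s N => hankel_odd_eq P β hm hlam (hmonic lam hlam s) (hdeg lam hlam s) (horth' s)
      (hP0 lam hlam s) (hP1 lam hlam s) (hrec lam hlam s) N
  have hpos : ∀ (s : ℝ) (k : ℕ),
      0 < freudPhi m lam s (P lam s k) (P lam s k) :=
    fun s k => h_pos hm hlam _ (hmonic lam hlam s k).ne_zero
  have HApos_e : ∀ (s : ℝ) (N : ℕ), 0 < hankelA m lam N s := by
    intro s N; rw [Heven s N]; exact Finset.prod_pos fun l _ => hpos s _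
  have HApos_o : ∀ (s : ℝ) (N : ℕ), 0 < hankelA m (lam + 1) N s := by
    intro s N; rw [Hodd s N]; exact Finset.prod_pos fun l _ => hpos s _
  have hstep : ∀ k, 1 ≤ k → freudPhi m lam t (P lam t k) (P lam t k)
      = β lam t k * freudPhi m lam t (P lam t (k - 1)) (P lam t (k - 1)) :=
    fun k hk => h_step P β hm hlam (hmonic lam hlam t) (hdeg lam hlam t) (horth' t)
      (hrec lam hlam t) k hk
  have Der_e : ∀ N : ℕ, HasDerivAt (hankelA m lam N)
      ((∑ j ∈ Finset.Icc 1 (2 * N - 1), β lam t j) * hankelA m lam N t) t :=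
    fun N => hankel_even_deriv P β hm hlam (hmonic lam hlam t) (hdeg lam hlam t) (horth' t)
      (hP0 lam hlam t) (hP1 lam hlam t) (hrec lam hlam t) N
  have Der_o : ∀ N : ℕ, HasDerivAt (hankelA m (lam + 1) N)
      ((∑ j ∈ Finset.Icc 1 (2 * N), β lam t j) * hankelA m (lam + 1) N t) t :=
    fun N => hankel_odd_deriv P β hm hlam (hmonic lam hlam t) (hdeg lam hlam t) (horth' t)
      (hP0 lam hlam t) (hP1 lam hlam t) (hrec lam hlam t) N
  set he : ℕ → ℝ := fun l => freudPhi m lam t (P lam t (2 * l)) (P lam t (2 * l)) with hhe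
  set ho : ℕ → ℝ := fun l => freudPhi m lam t (P lam t (2 * l + 1)) (P lam t (2 * l + 1))
    with hho
  refine ⟨fun hn => ⟨?_, ?_⟩, ?_, ?_⟩
  · -- β (2n) ratio formula
    obtain ⟨n', rfl⟩ : ∃ n', n = n' + 1 := ⟨n - 1, by omega⟩
    have hβh : he (n' + 1) = β lam t (2 * (n' + 1)) * ho n' := by
      have h := hstep (2 * (n' + 1)) (by omega)
      rw [show 2 * (n' + 1) - 1 = 2 * n' + 1 by omega] at h
      exact h
    rw [Heven t (n' + 1 + 1), Heven t (n' + 1), Hodd t (n' + 1 - 1), Hodd t (n' + 1)]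
    rw [show n' + 1 - 1 = n' by omega]
    rw [Finset.prod_range_succ (fun l => freudPhi m lam t (P lam t (2 * l)) (P lam t (2 * l))),
      Finset.prod_range_succ
        (fun l => freudPhi m lam t (P lam t (2 * l + 1)) (P lam t (2 * l + 1)))]
    have hpe : 0 < ∏ l ∈ Finset.range (n' + 1), he l :=
      Finset.prod_pos fun l _ => hpos t _
    have hpo : 0 < ∏ l ∈ Finset.range n', ho l :=
      Finset.prod_pos fun l _ => hpos t _
    have hpon : 0 < ho n' := hpos t _
    show β lam t (2 * (n' + 1)) =
      (∏ l ∈ Finset.range (n' + 1), he l) * he (n' + 1) * (∏ l ∈ Finset.range n', ho l) /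
        ((∏ l ∈ Finset.range (n' + 1), he l) * ((∏ l ∈ Finset.range n', ho l) * ho n'))
    rw [hβh]
    field_simp
  · -- β (2n) derivative formula
    obtain ⟨n', rfl⟩ : ∃ n', n = n' + 1 := ⟨n - 1, by omega⟩
    rw [deriv_log_div (hankelA m (lam + 1) (n' + 1)) (hankelA m lam (n' + 1))
      (fun s => HApos_o s (n' + 1)) (fun s => HApos_e s (n' + 1))
      (Der_o (n' + 1)) (Der_e (n' + 1))]
    rw [show 2 * (n' + 1) = (2 * n' + 1) + 1 by omega,
      Finset.sum_Icc_succ_top (by omega : 1 ≤ 2 * n' + 1 + 1)]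
    rw [show 2 * n' + 1 + 1 - 1 = 2 * n' + 1 by omega]
    ring
  · -- β (2n+1) ratio formula
    have hβh : ho n = β lam t (2 * n + 1) * he n := by
      have h := hstep (2 * n + 1) (by omega)
      rw [show 2 * n + 1 - 1 = 2 * n by omega] at h
      exact h
    rw [Heven t n, Heven t (n + 1), Hodd t n, Hodd t (n + 1)]
    rw [Finset.prod_range_succ (fun l => freudPhi m lam t (P lam t (2 * l)) (P lam t (2 * l))),
      Finset.prod_range_succ
        (fun l => freudPhi m lam t (P lam t (2 * l + 1)) (P lam t (2 * l + 1)))]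
    have hpe : 0 < ∏ l ∈ Finset.range n, he l :=
      Finset.prod_pos fun l _ => hpos t _
    have hpo : 0 < ∏ l ∈ Finset.range n, ho l :=
      Finset.prod_pos fun l _ => hpos t _
    have hpen : 0 < he n := hpos t _
    show β lam t (2 * n + 1) =
      (∏ l ∈ Finset.range n, he l) * ((∏ l ∈ Finset.range n, ho l) * ho n) /
        ((∏ l ∈ Finset.range n, he l) * he n * (∏ l ∈ Finset.range n, ho l))
    rw [hβh]
    field_simp
  · -- β (2n+1) derivative formula
    rw [deriv_log_div (hankelA m lam (n + 1)) (hankelA m (lam + 1) n)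
      (fun s => HApos_e s (n + 1)) (fun s => HApos_o s n)
      (Der_e (n + 1)) (Der_o n)]
    rw [show 2 * (n + 1) - 1 = 2 * n + 1 by omega,
      Finset.sum_Icc_succ_top (by omega : 1 ≤ 2 * n + 1)]
    ring
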